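/- Let G be an undirected graph and fix a matching {e1,…,es} of maximum size which, among all maximum matchings, maximizes the number of free vertices in the set W of unmatched vertices. Then there is a bijective correspondence between the tight components of G and the non-free vertices of W: every tight component contains exactly one non-free vertex of W, and every non-free vertex of W lies in a tight component. -/

import Mathlib

/-- A graph is *tight* if it is connected and for every vertex `v`, the induced
subgraph on the complement of `v` has a perfect matching, and every perfect
matching of it has the property that no matching edge has exactly one endpoint
adjacent to `v`. -/
def IsTight {V : Type*} (G : SimpleGraph V) : Prop :=
  G.Connected ∧ ∀ v : V,
    (∃ M : (G.induce {u | u ≠ v}).Subgraph, M.IsPerfectMatching) ∧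
    ∀ M : (G.induce {u | u ≠ v}).Subgraph, M.IsPerfectMatching →
      ∀ a b : {u | u ≠ v}, M.Adj a b → (G.Adj v ↑a ↔ G.Adj v ↑b)

/-- `w` (unmatched by `M`) is a *free* vertex: it has a free neighbor, i.e. a
vertex `a` of some matching edge `ab` with `w` adjacent to `a` but not `b`. -/
def IsFreeVertex {V : Type*} (G : SimpleGraph V) (M : G.Subgraph) (w : V) : Prop :=
  ∃ a b, M.Adj a b ∧ G.Adj w a ∧ ¬ G.Adj w b

namespace Stmt14Aux

open SimpleGraph Set

variable {V : Type*} {G : SimpleGraph V}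

variable {V : Type*} {G : SimpleGraph V}

lemma mem_supp_of_adj'' {M : G.Subgraph} {c : G.ConnectedComponent} {a b : V}
    (ha : a ∈ c.supp) (h : M.Adj a b) : b ∈ c.supp := by
  rw [ConnectedComponent.mem_supp_iff] at ha ⊢
  rw [← ha]
  exact ConnectedComponent.connectedComponentMk_eq_of_adj (M.adj_sub h).symm

lemma aux_insert_edge {M' : G.Subgraph} (hM' : M'.IsMatching) {x y : V} (hxy : G.Adj x y)
    (hx : x ∉ M'.verts) (hy : y ∉ M'.verts) :
    ∃ N : G.Subgraph, N.IsMatching ∧ N.verts = insert x (insert y M'.verts) := by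
  refine ⟨M' ⊔ G.subgraphOfAdj hxy, ?_, ?_⟩
  · refine hM'.sup (Subgraph.IsMatching.subgraphOfAdj hxy) ?_
    rw [hM'.support_eq_verts]
    refine Set.disjoint_of_subset_right (Subgraph.support_subset_verts _) ?_
    rw [subgraphOfAdj_verts, Set.disjoint_right]
    rintro a (rfl | rfl) <;> simp_all
  · rw [Subgraph.verts_sup, subgraphOfAdj_verts]
    ext u
    simp only [Set.mem_union, Set.mem_insert_iff, Set.mem_singleton_iff]
    tauto

lemma aux_key {M' : G.Subgraph} (hM' : M'.IsMatching) {a b b' : V}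
    (h1 : M'.Adj a b) (h2 : M'.Adj a b') : b = b' := by
  obtain ⟨q, hq, huq⟩ := hM' (M'.edge_vert h1)
  rw [huq b h1, huq b' h2]

lemma aux_deleteVerts_pair {M' : G.Subgraph} (hM' : M'.IsMatching) {z z' : V}
    (h : M'.Adj z z') : (M'.deleteVerts {z, z'}).IsMatching := by
  intro v hv
  rw [Subgraph.deleteVerts_verts] at hv
  obtain ⟨p, hp, hup⟩ := hM' hv.1
  have hpz : p ≠ z := by
    rintro rfl
    exact hv.2 (by simp [aux_key hM' hp.symm h])
  have hpz' : p ≠ z' := by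
    rintro rfl
    exact hv.2 (by simp [aux_key hM' hp.symm h.symm])
  exact ⟨p, Subgraph.deleteVerts_adj.mpr ⟨hv.1, hv.2, M'.edge_vert hp.symm, by simp [hpz, hpz'], hp⟩,
    fun y hy => hup y ((Subgraph.deleteVerts_adj.mp hy).2.2.2.2)⟩

lemma aux_deleteVerts_supp {M : G.Subgraph} (hM : M.IsMatching) (c : G.ConnectedComponent) :
    (M.deleteVerts c.supp).IsMatching := by
  intro v hv
  rw [Subgraph.deleteVerts_verts] at hv
  obtain ⟨p, hp, hup⟩ := hM hv.1
  have hpc : p ∉ c.supp := fun hh => hv.2 (mem_supp_of_adj'' hh hp.symm)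
  exact ⟨p, Subgraph.deleteVerts_adj.mpr ⟨hv.1, hv.2, M.edge_vert hp.symm, hpc, hp⟩,
    fun y hy => hup y ((Subgraph.deleteVerts_adj.mp hy).2.2.2.2)⟩

lemma aux_swap {M' : G.Subgraph} (hM' : M'.IsMatching) {x z z' : V} (hzz' : M'.Adj z z')
    (hx : x ∉ M'.verts) (hxz' : G.Adj x z') :
    ∃ N : G.Subgraph, N.IsMatching ∧ N.verts = insert x (M'.verts \ {z}) ∧
      (∀ a b, N.Adj a b ↔
        ((M'.Adj a b ∧ a ≠ z ∧ a ≠ z' ∧ b ≠ z ∧ b ≠ z') ∨ (a = x ∧ b = z') ∨ (a = z' ∧ b = x))) := by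
  have hzv : z ∈ M'.verts := M'.edge_vert hzz'
  have hz'v : z' ∈ M'.verts := M'.edge_vert hzz'.symm
  have hzz'ne : z ≠ z' := (M'.adj_sub hzz').ne
  have hxz : x ≠ z := fun hh => hx (hh ▸ hzv)
  have hxz'ne : x ≠ z' := hxz'.ne
  refine ⟨M'.deleteVerts {z, z'} ⊔ G.subgraphOfAdj hxz', ?_, ?_, ?_⟩
  · refine (aux_deleteVerts_pair hM' hzz').sup (Subgraph.IsMatching.subgraphOfAdj hxz') ?_
    refine Set.disjoint_of_subset (Subgraph.support_subset_verts _)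
      (Subgraph.support_subset_verts _) ?_
    rw [Subgraph.deleteVerts_verts, subgraphOfAdj_verts, Set.disjoint_right]
    rintro a (rfl | rfl)
    · exact fun hh => hx hh.1
    · exact fun hh => hh.2 (by simp)
  · rw [Subgraph.verts_sup, Subgraph.deleteVerts_verts, subgraphOfAdj_verts]
    ext u
    simp only [Set.mem_union, Set.mem_diff, Set.mem_insert_iff, Set.mem_singleton_iff]
    constructor
    · rintro (⟨h1, h2⟩ | (rfl | rfl))
      · exact Or.inr ⟨h1, fun hh => h2 (Or.inl hh)⟩
      · exact Or.inl rfl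
      · exact Or.inr ⟨hz'v, Ne.symm hzz'ne⟩
    · rintro (rfl | ⟨h1, h2⟩)
      · exact Or.inr (Or.inl rfl)
      · by_cases hu : u = z'
        · exact Or.inr (Or.inr hu)
        · exact Or.inl ⟨h1, by simp [h2, hu]⟩
  · intro a b
    rw [Subgraph.sup_adj, Subgraph.deleteVerts_adj, subgraphOfAdj_adj]
    constructor
    · rintro (⟨h1, h2, h3, h4, h5⟩ | h)
      · simp only [Set.mem_insert_iff, Set.mem_singleton_iff, not_or] at h2 h4
        exact Or.inl ⟨h5, h2.1, h2.2, h4.1, h4.2⟩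
      · rw [Sym2.eq_iff] at h
        tauto
    · rintro (⟨h1, h2, h3, h4, h5⟩ | (⟨rfl, rfl⟩ | ⟨rfl, rfl⟩))
      · exact Or.inl ⟨M'.edge_vert h1, by simp [h2, h3], M'.edge_vert h1.symm, by simp [h4, h5], h1⟩
      · exact Or.inr (by rw [Sym2.eq_iff]; tauto)
      · exact Or.inr (by rw [Sym2.eq_iff]; tauto)

/-- `v` is exposable: some matching exposes `v` instead of `w`, preserving the
freeness status of all other unmatched vertices. -/
def ExpM {V : Type*} (G : SimpleGraph V) (M : G.Subgraph) (w v : V) : Prop :=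
  ∃ N : G.Subgraph, N.IsMatching ∧ N.verts = insert w M.verts \ {v} ∧
    ∀ u, u ∉ M.verts → u ≠ w →
      ((∃ a b, N.Adj a b ∧ G.Adj u a ∧ ¬ G.Adj u b) ↔ (∃ a b, M.Adj a b ∧ G.Adj u a ∧ ¬ G.Adj u b))

section main
variable [Fintype V] {M : G.Subgraph} {w : V}

lemma aux_exp_mem (hmax : ∀ M' : G.Subgraph, M'.IsMatching → M'.verts.ncard ≤ M.verts.ncard)
    (hw : w ∉ M.verts) {v : V} (h : ExpM G M w v) : v ∈ insert w M.verts := by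
  obtain ⟨N, hN, hNv, -⟩ := h
  by_contra hc
  have h2 := hmax N hN
  rw [hNv, Set.diff_singleton_eq_self hc, Set.ncard_insert_of_notMem hw (Set.toFinite _)] at h2
  omega

lemma aux_exp_card (hmax : ∀ M' : G.Subgraph, M'.IsMatching → M'.verts.ncard ≤ M.verts.ncard)
    (hw : w ∉ M.verts) {v : V} {N : G.Subgraph} (hNv : N.verts = insert w M.verts \ {v})
    (hv : v ∈ insert w M.verts) : N.verts.ncard = M.verts.ncard := by
  have h1 : (insert w M.verts \ {v}).ncard + 1 = (insert w M.verts).ncard :=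
    Set.ncard_diff_singleton_add_one hv (Set.toFinite _)
  rw [Set.ncard_insert_of_notMem hw (Set.toFinite _)] at h1
  rw [hNv]
  omega

lemma aux_nonfree
    (hfree : ∀ M' : G.Subgraph, M'.IsMatching → M'.verts.ncard = M.verts.ncard →
      {w : V | w ∉ M'.verts ∧ (∃ a b, M'.Adj a b ∧ G.Adj w a ∧ ¬ G.Adj w b)}.ncard
        ≤ {w : V | w ∉ M.verts ∧ (∃ a b, M.Adj a b ∧ G.Adj w a ∧ ¬ G.Adj w b)}.ncard)
    (hw : w ∉ M.verts) (hnf : ¬ ∃ a b, M.Adj a b ∧ G.Adj w a ∧ ¬ G.Adj w b)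
    {x : V} {N : G.Subgraph} (hN : N.IsMatching) (hNv : N.verts = insert w M.verts \ {x})
    (hx : x ∈ insert w M.verts) (hcard : N.verts.ncard = M.verts.ncard)
    (htrans : ∀ u, u ∉ M.verts → u ≠ w →
      ((∃ a b, N.Adj a b ∧ G.Adj u a ∧ ¬ G.Adj u b) ↔ (∃ a b, M.Adj a b ∧ G.Adj u a ∧ ¬ G.Adj u b))) :
    ¬ ∃ a b, N.Adj a b ∧ G.Adj x a ∧ ¬ G.Adj x b := by
  intro hfx
  have hle := hfree N hN hcard
  have hmemN : ∀ u, u ∉ N.verts ↔ ((u ∉ M.verts ∧ u ≠ w) ∨ u = x) := by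
    intro u
    rw [hNv]
    simp only [Set.mem_diff, Set.mem_insert_iff, Set.mem_singleton_iff]
    by_cases hu : u = x <;> by_cases h2 : u = w <;> simp [hu, h2] <;> tauto
  have hSeq : {u : V | u ∉ N.verts ∧ (∃ a b, N.Adj a b ∧ G.Adj u a ∧ ¬ G.Adj u b)} =
      insert x {u : V | u ∉ M.verts ∧ (∃ a b, M.Adj a b ∧ G.Adj u a ∧ ¬ G.Adj u b)} := by
    ext u
    simp only [Set.mem_setOf_eq, Set.mem_insert_iff]
    constructor
    · rintro ⟨hu, hf⟩
      rcases (hmemN u).mp hu with ⟨h1, h2⟩ | h3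
      · exact Or.inr ⟨h1, (htrans u h1 h2).mp hf⟩
      · exact Or.inl h3
    · rintro (rfl | ⟨h1, h2⟩)
      · exact ⟨(hmemN u).mpr (Or.inr rfl), hfx⟩
      · have h3 : u ≠ w := fun hh => hnf (hh ▸ h2)
        exact ⟨(hmemN u).mpr (Or.inl ⟨h1, h3⟩), (htrans u h1 h3).mpr h2⟩
  have hxS : x ∉ {u : V | u ∉ M.verts ∧ (∃ a b, M.Adj a b ∧ G.Adj u a ∧ ¬ G.Adj u b)} := by
    rcases Set.mem_insert_iff.mp hx with rfl | h2
    · exact fun hh => hnf hh.2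
    · exact fun hh => hh.1 h2
  rw [hSeq, Set.ncard_insert_of_notMem hxS (Set.toFinite _)] at hle
  omega

lemma aux_step (hM : M.IsMatching)
    (hmax : ∀ M' : G.Subgraph, M'.IsMatching → M'.verts.ncard ≤ M.verts.ncard)
    (hfree : ∀ M' : G.Subgraph, M'.IsMatching → M'.verts.ncard = M.verts.ncard →
      {w : V | w ∉ M'.verts ∧ (∃ a b, M'.Adj a b ∧ G.Adj w a ∧ ¬ G.Adj w b)}.ncard
        ≤ {w : V | w ∉ M.verts ∧ (∃ a b, M.Adj a b ∧ G.Adj w a ∧ ¬ G.Adj w b)}.ncard)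
    (hw : w ∉ M.verts) (hnf : ¬ ∃ a b, M.Adj a b ∧ G.Adj w a ∧ ¬ G.Adj w b)
    {x z : V} (hx : ExpM G M w x) (hadj : G.Adj x z) : ExpM G M w z := by
  have hnoedge : ∀ {P : G.Subgraph}, P.IsMatching → P.verts.ncard = M.verts.ncard →
      ∀ {a b}, a ∉ P.verts → b ∉ P.verts → ¬ G.Adj a b := by
    intro P hP hPc a b ha hb hab
    obtain ⟨Q, hQ, hQv⟩ := aux_insert_edge hP hab ha hb
    have h2 := hmax Q hQ
    have hanb : a ∉ insert b P.verts := by simp [hab.ne, ha]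
    rw [hQv, Set.ncard_insert_of_notMem hanb (Set.toFinite _),
      Set.ncard_insert_of_notMem hb (Set.toFinite _)] at h2
    omega
  have hxmem : x ∈ insert w M.verts := aux_exp_mem hmax hw hx
  obtain ⟨N, hN, hNv, hNf⟩ := hx
  have hxN : x ∉ N.verts := by rw [hNv]; simp
  have hcard : N.verts.ncard = M.verts.ncard := aux_exp_card hmax hw hNv hxmem
  have hnfx : ¬ ∃ a b, N.Adj a b ∧ G.Adj x a ∧ ¬ G.Adj x b :=
    aux_nonfree hfree hw hnf hN hNv hxmem hcard hNf
  have hz : z ∈ N.verts := by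
    by_contra hc
    exact hnoedge hN hcard hxN hc hadj
  obtain ⟨z', hzz', -⟩ := hN hz
  have hxz' : G.Adj x z' := by
    by_contra hc
    exact hnfx ⟨z, z', hzz', hadj, hc⟩
  obtain ⟨N', hN', hN'v, hN'adj⟩ := aux_swap hN hzz' hxN hxz'
  have hzx : z ≠ x := fun hh => hxN (hh ▸ hz)
  have hz'x : z' ≠ x := fun hh => hxN (hh ▸ N.edge_vert hzz'.symm)
  have hN'verts : N'.verts = insert w M.verts \ {z} := by
    rw [hN'v, hNv]
    ext u
    simp only [Set.mem_insert_iff, Set.mem_diff, Set.mem_singleton_iff]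
    constructor
    · rintro (rfl | ⟨⟨h1, -⟩, h3⟩)
      · exact ⟨hxmem, fun h => hzx h.symm⟩
      · exact ⟨h1, h3⟩
    · rintro ⟨h1, h2⟩
      by_cases hu : u = x
      · exact Or.inl hu
      · exact Or.inr ⟨⟨h1, hu⟩, h2⟩
  have hzmem : z ∈ insert w M.verts := (hNv ▸ hz).1
  have hN'card : N'.verts.ncard = M.verts.ncard := aux_exp_card hmax hw hN'verts hzmem
  refine ⟨N', hN', hN'verts, ?_⟩
  intro u hu huw
  rw [← hNf u hu huw]
  have huM : u ∉ insert w M.verts := by simp [hu, huw]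
  have huN : u ∉ N.verts := by rw [hNv]; simp [huM]
  have huN' : u ∉ N'.verts := by rw [hN'verts]; simp [huM]
  have hux : ¬ G.Adj u x := hnoedge hN hcard huN hxN
  have hzN' : z ∉ N'.verts := by rw [hN'verts]; simp
  have huz : ¬ G.Adj u z := hnoedge hN' hN'card huN' hzN'
  constructor
  · rintro ⟨a, b, hab, hua, hub⟩
    rcases (hN'adj a b).mp hab with ⟨h1, -⟩ | (⟨ha, hb⟩ | ⟨ha, hb⟩)
    · exact ⟨a, b, h1, hua, hub⟩
    · exact absurd (ha ▸ hua) hux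
    · exact ⟨z', z, hzz'.symm, ha ▸ hua, huz⟩
  · rintro ⟨a, b, hab, hua, hub⟩
    by_cases haz : a = z
    · exact absurd hua (haz ▸ huz)
    by_cases haz' : a = z'
    · exact ⟨z', x, (hN'adj z' x).mpr (Or.inr (Or.inr ⟨rfl, rfl⟩)), haz' ▸ hua, hux⟩
    by_cases hbz : b = z
    · exact absurd (aux_key hN (hbz ▸ hab.symm) hzz') haz'
    by_cases hbz' : b = z'
    · exact absurd (aux_key hN (hbz' ▸ hab.symm) hzz'.symm) haz
    · exact ⟨a, b, (hN'adj a b).mpr (Or.inl ⟨hab, haz, haz', hbz, hbz'⟩), hua, hub⟩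

lemma aux_reach (hM : M.IsMatching)
    (hmax : ∀ M' : G.Subgraph, M'.IsMatching → M'.verts.ncard ≤ M.verts.ncard)
    (hfree : ∀ M' : G.Subgraph, M'.IsMatching → M'.verts.ncard = M.verts.ncard →
      {w : V | w ∉ M'.verts ∧ (∃ a b, M'.Adj a b ∧ G.Adj w a ∧ ¬ G.Adj w b)}.ncard
        ≤ {w : V | w ∉ M.verts ∧ (∃ a b, M.Adj a b ∧ G.Adj w a ∧ ¬ G.Adj w b)}.ncard)
    (hw : w ∉ M.verts) (hnf : ¬ ∃ a b, M.Adj a b ∧ G.Adj w a ∧ ¬ G.Adj w b)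
    {v : V} (hr : G.Reachable v w) : ExpM G M w v := by
  obtain ⟨p⟩ := hr
  suffices h : ∀ (v u : V) (p : G.Walk v u), u = w → ExpM G M w v from h v w p rfl
  intro v u p
  induction p with
  | nil =>
    rintro rfl
    exact ⟨M, hM, by rw [Set.insert_diff_self_of_notMem hw], fun u _ _ => Iff.rfl⟩
  | cons h q ih =>
    intro hu
    exact aux_step hM hmax hfree hw hnf (ih hu) h.symm

end main

lemma aux_induce_reach {s : Set V} {u v : V} (p : G.Walk u v) (hs : ∀ x ∈ p.support, x ∈ s) :
    (G.induce s).Reachable ⟨u, hs u p.start_mem_support⟩ ⟨v, hs v p.end_mem_support⟩ := by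
  induction p with
  | nil => exact Reachable.refl _
  | @cons a b c h q ih =>
    have hb : ∀ x ∈ q.support, x ∈ s := fun x hx => hs x (by simp [hx])
    have h1 : (G.induce s).Adj ⟨a, hs a (SimpleGraph.Walk.start_mem_support _)⟩
        ⟨b, hb b q.start_mem_support⟩ := h
    exact (h1.reachable).trans (ih hb)

lemma aux_induce_connected (c : G.ConnectedComponent) : (G.induce c.supp).Connected := by
  classical
  obtain ⟨v₀, hv₀⟩ := c.exists_rep
  rw [connected_iff]
  refine ⟨?_, ⟨⟨v₀, hv₀⟩⟩⟩
  rintro ⟨a, ha⟩ ⟨b, hb⟩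
  rw [ConnectedComponent.mem_supp_iff] at ha hb
  have hr : G.Reachable a b := ConnectedComponent.exact (ha.trans hb.symm)
  obtain ⟨p⟩ := hr
  have hsup : ∀ x ∈ p.support, x ∈ c.supp := by
    intro x hx
    have hrx : G.Reachable a x := ⟨p.takeUntil x hx⟩
    rw [ConnectedComponent.mem_supp_iff, ← ha]
    exact (ConnectedComponent.sound hrx).symm
  exact aux_induce_reach p hsup

lemma aux_restrict {c : G.ConnectedComponent} (v : ↥c.supp) {M' : G.Subgraph}
    (hM' : M'.IsMatching) (hsub : c.supp \ {(v : V)} ⊆ M'.verts) (hv : (v : V) ∉ M'.verts) :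
    ∃ P : ((G.induce c.supp).induce {u | u ≠ v}).Subgraph, P.IsPerfectMatching ∧
      ∀ a b : {u : ↥c.supp | u ≠ v}, P.Adj a b ↔ M'.Adj ↑↑a ↑↑b := by
  refine ⟨⟨Set.univ, fun a b => M'.Adj ↑↑a ↑↑b, fun h => M'.adj_sub h,
    fun _ => Set.mem_univ _, ⟨fun a b h => h.symm⟩⟩, ⟨?_, fun a => Set.mem_univ _⟩,
    fun a b => Iff.rfl⟩
  rintro a -
  have ha' : ((a : ↥c.supp) : V) ∈ c.supp := (a : ↥c.supp).2
  have hane : ((a : ↥c.supp) : V) ≠ (v : V) := fun hh => a.2 (Subtype.ext hh)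
  obtain ⟨p, hp, hup⟩ := hM' (hsub ⟨ha', hane⟩)
  have hpc : p ∈ c.supp := mem_supp_of_adj'' ha' hp
  have hpv : p ≠ (v : V) := fun hh => hv (hh ▸ M'.edge_vert hp.symm)
  refine ⟨⟨⟨p, hpc⟩, fun hh => hpv (congrArg Subtype.val hh)⟩, hp, ?_⟩
  intro y hy
  have : ((y : ↥c.supp) : V) = p := hup _ hy
  exact Subtype.ext (Subtype.ext this)

lemma aux_lift {c : G.ConnectedComponent} (v : ↥c.supp)
    {P : ((G.induce c.supp).induce {u | u ≠ v}).Subgraph} (hP : P.IsPerfectMatching) :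
    ∃ Q : G.Subgraph, Q.IsMatching ∧ Q.verts = c.supp \ {(v : V)} ∧
      (∀ x y, Q.Adj x y → ∃ a b : {u : ↥c.supp | u ≠ v}, P.Adj a b ∧ ↑↑a = x ∧ ↑↑b = y) ∧
      (∀ a b : {u : ↥c.supp | u ≠ v}, P.Adj a b → Q.Adj ↑↑a ↑↑b) := by
  refine ⟨⟨c.supp \ {(v : V)}, fun x y => ∃ a b : {u : ↥c.supp | u ≠ v},
      P.Adj a b ∧ ↑↑a = x ∧ ↑↑b = y, ?_, ?_, ?_⟩, ?_, rfl, fun x y h => h,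
      fun a b hab => ⟨a, b, hab, rfl, rfl⟩⟩
  · rintro x y ⟨a, b, hab, rfl, rfl⟩
    exact P.adj_sub hab
  · rintro x y ⟨a, b, hab, rfl, rfl⟩
    exact ⟨(a : ↥c.supp).2, fun hh => a.2 (Subtype.ext hh)⟩
  · constructor; rintro x y ⟨a, b, hab, rfl, rfl⟩
    exact ⟨b, a, hab.symm, rfl, rfl⟩
  · rintro x ⟨hx1, hx2⟩
    set a : {u : ↥c.supp | u ≠ v} :=
      ⟨⟨x, hx1⟩, fun hh => hx2 (congrArg Subtype.val hh)⟩ with ha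
    obtain ⟨b, hb, hub⟩ := hP.1 (hP.2 a)
    refine ⟨↑↑b, ⟨a, b, hb, rfl, rfl⟩, ?_⟩
    rintro y ⟨a', b', hab', ha', rfl⟩
    have haa : a' = a := Subtype.ext (Subtype.ext ha')
    rw [hub b' (haa ▸ hab')]

section parts
variable [Fintype V] {M : G.Subgraph}

theorem aux_part2 (hM : M.IsMatching)
    (hmax : ∀ M' : G.Subgraph, M'.IsMatching → M'.verts.ncard ≤ M.verts.ncard)
    (hfree : ∀ M' : G.Subgraph, M'.IsMatching →
      M'.verts.ncard = M.verts.ncard →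
      {w : V | w ∉ M'.verts ∧ IsFreeVertex G M' w}.ncard
        ≤ {w : V | w ∉ M.verts ∧ IsFreeVertex G M w}.ncard)
    (w : V) (hw : w ∉ M.verts) (hnf : ¬ IsFreeVertex G M w) :
    IsTight (G.induce (G.connectedComponentMk w).supp) := by
  set c := G.connectedComponentMk w with hc
  have hwc : w ∈ c.supp := ConnectedComponent.mem_supp_iff _ _ |>.mpr rfl
  have hexp : ∀ v ∈ c.supp, ExpM G M w v := by
    intro v hv
    exact aux_reach hM hmax hfree hw hnf
      (ConnectedComponent.exact ((ConnectedComponent.mem_supp_iff _ _).mp hv))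
  have hcov : ∀ v ∈ c.supp, v ∈ insert w M.verts :=
    fun v hv => aux_exp_mem hmax hw (hexp v hv)
  refine ⟨aux_induce_connected c, fun v => ⟨?_, ?_⟩⟩
  · obtain ⟨N, hN, hNv, -⟩ := hexp (v : V) v.2
    have hsub : c.supp \ {(v : V)} ⊆ N.verts := by
      rw [hNv]
      rintro x ⟨hx1, hx2⟩
      exact ⟨hcov x hx1, hx2⟩
    have hvN : (v : V) ∉ N.verts := by rw [hNv]; simp
    obtain ⟨P, hP, -⟩ := aux_restrict v hN hsub hvN
    exact ⟨P, hP⟩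
  · intro P hP a b hab
    obtain ⟨Q, hQ, hQv, hQadj1, hQadj2⟩ := aux_lift v hP
    set Mv := M.deleteVerts c.supp ⊔ Q with hMvdef
    have hdisj : Disjoint (M.deleteVerts c.supp).support Q.support := by
      refine Set.disjoint_of_subset (Subgraph.support_subset_verts _)
        (Subgraph.support_subset_verts _) ?_
      rw [Subgraph.deleteVerts_verts, hQv, Set.disjoint_left]
      rintro x ⟨-, hx2⟩ ⟨hx3, -⟩
      exact hx2 hx3
    have hMvm : Mv.IsMatching := (aux_deleteVerts_supp hM c).sup hQ hdisj
    have hvc : (v : V) ∈ c.supp := v.2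
    have hMvverts : Mv.verts = insert w M.verts \ {(v : V)} := by
      rw [hMvdef, Subgraph.verts_sup, Subgraph.deleteVerts_verts, hQv]
      ext x
      simp only [Set.mem_union, Set.mem_diff, Set.mem_insert_iff, Set.mem_singleton_iff]
      constructor
      · rintro (⟨hx1, hx2⟩ | ⟨hx1, hx2⟩)
        · exact ⟨Or.inr hx1, fun hh => hx2 (hh ▸ hvc)⟩
        · exact ⟨Set.mem_insert_iff.mp (hcov x hx1), hx2⟩
      · rintro ⟨hx1, hx2⟩
        rcases hx1 with rfl | hx1
        · exact Or.inr ⟨hwc, hx2⟩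
        · by_cases hxc : x ∈ c.supp
          · exact Or.inr ⟨hxc, hx2⟩
          · exact Or.inl ⟨hx1, hxc⟩
    have hvmem : (v : V) ∈ insert w M.verts := hcov _ hvc
    have hcard := aux_exp_card hmax hw hMvverts hvmem
    have htrans : ∀ u, u ∉ M.verts → u ≠ w →
        ((∃ a b, Mv.Adj a b ∧ G.Adj u a ∧ ¬ G.Adj u b) ↔
          (∃ a b, M.Adj a b ∧ G.Adj u a ∧ ¬ G.Adj u b)) := by
      intro u hu huw
      have huc : u ∉ c.supp := by
        intro hh
        rcases Set.mem_insert_iff.mp (hcov u hh) with rfl | h2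
        exacts [huw rfl, hu h2]
      have hnb : ∀ x, G.Adj u x → x ∉ c.supp := by
        intro x hux hxc
        refine huc ?_
        rw [ConnectedComponent.mem_supp_iff] at hxc ⊢
        rw [← hxc]
        exact ConnectedComponent.connectedComponentMk_eq_of_adj hux
      constructor
      · rintro ⟨a', b', hab', hua', hub'⟩
        rcases Subgraph.sup_adj.mp hab' with h1 | h2
        · exact ⟨a', b', (Subgraph.deleteVerts_adj.mp h1).2.2.2.2, hua', hub'⟩
        · obtain ⟨a₀, b₀, -, ha₀, -⟩ := hQadj1 _ _ h2
          exact absurd hua' (fun hh => hnb a' hh (ha₀ ▸ (a₀ : ↥c.supp).2))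
      · rintro ⟨a', b', hab', hua', hub'⟩
        have ha'c : a' ∉ c.supp := hnb a' hua'
        have hb'c : b' ∉ c.supp := fun hh => ha'c (mem_supp_of_adj'' hh hab'.symm)
        exact ⟨a', b', Subgraph.sup_adj.mpr (Or.inl (Subgraph.deleteVerts_adj.mpr
          ⟨M.edge_vert hab', ha'c, M.edge_vert hab'.symm, hb'c, hab'⟩)), hua', hub'⟩
    have hnfv := aux_nonfree hfree hw hnf hMvm hMvverts hvmem hcard htrans
    push_neg at hnfv
    have hadjv : Mv.Adj ↑↑a ↑↑b := Subgraph.sup_adj.mpr (Or.inr (hQadj2 a b hab))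
    exact ⟨fun h => hnfv _ _ hadjv h, fun h => hnfv _ _ hadjv.symm h⟩

end parts

section parts1
variable [Fintype V] {M : G.Subgraph}

theorem aux_part1 (hM : M.IsMatching)
    (hmax : ∀ M' : G.Subgraph, M'.IsMatching → M'.verts.ncard ≤ M.verts.ncard)
    (c : G.ConnectedComponent) (ht : IsTight (G.induce c.supp)) :
    ∃! w : V, w ∈ c.supp ∧ w ∉ M.verts ∧ ¬ IsFreeVertex G M w := by
  classical
  obtain ⟨-, htv⟩ := ht
  -- there is an unmatched vertex in c.supp
  have hexists : ∃ u₀ ∈ c.supp, u₀ ∉ M.verts := by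
    by_contra hcon
    push_neg at hcon
    obtain ⟨v₀, hv₀⟩ := c.exists_rep
    have hv₀c : v₀ ∈ c.supp := (ConnectedComponent.mem_supp_iff _ _).mpr hv₀
    obtain ⟨P, hP⟩ := (htv ⟨v₀, hv₀c⟩).1
    obtain ⟨Q, hQ, hQv, -, -⟩ := aux_lift _ hP
    haveI : Fintype ↥Q.verts := Fintype.ofFinite _
    have h1 : Even (c.supp \ {v₀}).ncard := by
      have := hQ.even_card
      rwa [← Set.ncard_eq_toFinset_card', hQv] at this
    have h2 : Even (c.supp).ncard := by
      have hmc := hM.induce_connectedComponent c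
      haveI : Fintype ↥(M.induce (M.verts ∩ c.supp)).verts := Fintype.ofFinite _
      have := hmc.even_card
      rw [← Set.ncard_eq_toFinset_card'] at this
      have hint : (M.induce (M.verts ∩ c.supp)).verts = c.supp := by
        show M.verts ∩ c.supp = c.supp
        exact Set.inter_eq_right.mpr (fun x hx => hcon x hx)
      rwa [hint] at this
    have h3 : (c.supp \ {v₀}).ncard + 1 = c.supp.ncard :=
      Set.ncard_diff_singleton_add_one hv₀c (Set.toFinite _)
    obtain ⟨k, hk⟩ := h1
    obtain ⟨l, hl⟩ := h2
    omega
  obtain ⟨u₀, hu₀c, hu₀M⟩ := hexists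
  -- the matching restricted to c.supp is exactly c.supp \ {u₀}
  obtain ⟨P₀, hP₀⟩ := (htv ⟨u₀, hu₀c⟩).1
  obtain ⟨Q₀, hQ₀, hQ₀v, -, -⟩ := aux_lift _ hP₀
  have hdisj : Disjoint (M.deleteVerts c.supp).support Q₀.support := by
    refine Set.disjoint_of_subset (Subgraph.support_subset_verts _)
      (Subgraph.support_subset_verts _) ?_
    rw [Subgraph.deleteVerts_verts, hQ₀v, Set.disjoint_left]
    rintro x ⟨-, hx2⟩ ⟨hx3, -⟩
    exact hx2 hx3
  have hM₁ : (M.deleteVerts c.supp ⊔ Q₀).IsMatching :=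
    (aux_deleteVerts_supp hM c).sup hQ₀ hdisj
  have hle := hmax _ hM₁
  rw [Subgraph.verts_sup, Subgraph.deleteVerts_verts, hQ₀v] at hle
  have hd1 : Disjoint (M.verts \ c.supp) (c.supp \ {u₀}) := by
    rw [Set.disjoint_left]
    rintro x ⟨-, hx2⟩ ⟨hx3, -⟩
    exact hx2 hx3
  have hd2 : Disjoint (M.verts \ c.supp) (M.verts ∩ c.supp) := by
    rw [Set.disjoint_left]
    rintro x ⟨-, hx2⟩ ⟨-, hx3⟩
    exact hx2 hx3
  have hsplit : M.verts = (M.verts \ c.supp) ∪ (M.verts ∩ c.supp) := by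
    ext x
    by_cases hx : x ∈ c.supp <;> simp [hx]
  rw [Set.ncard_union_eq hd1 (Set.toFinite _) (Set.toFinite _)] at hle
  have hle2 : M.verts.ncard =
      (M.verts \ c.supp).ncard + (M.verts ∩ c.supp).ncard := by
    conv_lhs => rw [hsplit]
    exact Set.ncard_union_eq hd2 (Set.toFinite _) (Set.toFinite _)
  have hsub0 : M.verts ∩ c.supp ⊆ c.supp \ {u₀} := by
    rintro x ⟨hx1, hx2⟩
    exact ⟨hx2, fun hh => hu₀M (hh ▸ hx1)⟩
  have hkey : M.verts ∩ c.supp = c.supp \ {u₀} := by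
    refine Set.eq_of_subset_of_ncard_le hsub0 ?_ (Set.toFinite _)
    omega
  have huniq : ∀ y, y ∈ c.supp → y ∉ M.verts → y = u₀ := by
    intro y hy hyM
    by_contra hne
    have : y ∈ M.verts ∩ c.supp := hkey ▸ ⟨hy, hne⟩
    exact hyM this.1
  -- u₀ is not free
  have hsubM : c.supp \ {((⟨u₀, hu₀c⟩ : ↥c.supp) : V)} ⊆ M.verts := by
    rintro x ⟨hx1, hx2⟩
    have : x ∈ M.verts ∩ c.supp := hkey ▸ ⟨hx1, hx2⟩
    exact this.1
  obtain ⟨P₁, hP₁, hP₁adj⟩ := aux_restrict (⟨u₀, hu₀c⟩ : ↥c.supp) hM hsubM hu₀M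
  have hnf : ¬ IsFreeVertex G M u₀ := by
    rintro ⟨a, b, hab, hua, hub⟩
    have hac : a ∈ c.supp := by
      rw [ConnectedComponent.mem_supp_iff] at hu₀c ⊢
      rw [← hu₀c]
      exact ConnectedComponent.connectedComponentMk_eq_of_adj hua.symm
    have hbc : b ∈ c.supp := mem_supp_of_adj'' hac hab
    have hau : a ≠ u₀ := fun hh => hu₀M (hh ▸ M.edge_vert hab)
    have hbu : b ≠ u₀ := fun hh => hu₀M (hh ▸ M.edge_vert hab.symm)
    have hPab : P₁.Adj ⟨⟨a, hac⟩, fun hh => hau (congrArg Subtype.val hh)⟩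
        ⟨⟨b, hbc⟩, fun hh => hbu (congrArg Subtype.val hh)⟩ := (hP₁adj _ _).mpr hab
    have hiff := (htv ⟨u₀, hu₀c⟩).2 P₁ hP₁ _ _ hPab
    exact hub (hiff.mp hua)
  exact ⟨u₀, ⟨hu₀c, hu₀M, hnf⟩, fun y hy => huniq y hy.1 hy.2.1⟩

end parts1

end Stmt14Aux

/-- Given a maximum matching which, among maximum matchings, maximizes the
number of free unmatched vertices, there is a bijective correspondence between
tight components and non-free unmatched vertices: every tight component
contains exactly one non-free unmatched vertex, and every non-free unmatched
vertex lies in a tight component. -/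
theorem stmt14 {V : Type*} [Fintype V] (G : SimpleGraph V)
    (M : G.Subgraph) (hM : M.IsMatching)
    (hmax : ∀ M' : G.Subgraph, M'.IsMatching → M'.verts.ncard ≤ M.verts.ncard)
    (hfree : ∀ M' : G.Subgraph, M'.IsMatching →
      M'.verts.ncard = M.verts.ncard →
      {w : V | w ∉ M'.verts ∧ IsFreeVertex G M' w}.ncard
        ≤ {w : V | w ∉ M.verts ∧ IsFreeVertex G M w}.ncard) :
    (∀ c : G.ConnectedComponent, IsTight (G.induce c.supp) →
      ∃! w : V, w ∈ c.supp ∧ w ∉ M.verts ∧ ¬ IsFreeVertex G M w) ∧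
    (∀ w : V, w ∉ M.verts → ¬ IsFreeVertex G M w →
      IsTight (G.induce (G.connectedComponentMk w).supp)) := by
  exact ⟨fun c ht => Stmt14Aux.aux_part1 hM hmax c ht,
    fun w hw hnf => Stmt14Aux.aux_part2 hM hmax hfree w hw hnf⟩
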